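/- Let μ ∈ ℝ, φ > 0, and let Z = exp(X) where X is distributed according to the Gaussian measure N(μ, φ²) on ℝ. Then for every ε ≥ 0 with ε ≠ 1, the population Atkinson index satisfies 1 − (E[Z^{1−ε}])^{1/(1−ε)} / E[Z] = 1 − exp(−ε φ² / 2). -/

import Mathlib

open MeasureTheory ProbabilityTheory
open scoped ENNReal NNReal

lemma gaussianPDFReal_mul_exp (μ : ℝ) (v : NNReal) (hv : v ≠ 0) (t x : ℝ) :
    gaussianPDFReal μ v x * Real.exp (t * x)
      = Real.exp (t * μ + t ^ 2 * v / 2) * gaussianPDFReal (μ + t * v) v x := by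
  have hv' : (v : ℝ) ≠ 0 := by exact_mod_cast hv
  simp only [gaussianPDFReal]
  rw [mul_assoc, ← Real.exp_add, mul_left_comm, ← Real.exp_add]
  congr 1
  field_simp
  ring

lemma integral_exp_gaussianReal (μ : ℝ) (v : NNReal) (hv : v ≠ 0) (t : ℝ) :
    ∫ x, Real.exp (t * x) ∂(gaussianReal μ v) = Real.exp (t * μ + t ^ 2 * v / 2) := by
  rw [gaussianReal_of_var_ne_zero _ hv]
  have hd : (gaussianPDF μ v) = fun x => ((gaussianPDFReal μ v x).toNNReal : ℝ≥0∞) := by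
    ext x; rw [gaussianPDF_def]; rfl
  rw [hd, integral_withDensity_eq_integral_smul
    ((measurable_gaussianPDFReal μ v).real_toNNReal) (fun x => Real.exp (t * x))]
  have : ∀ x, (gaussianPDFReal μ v x).toNNReal • Real.exp (t * x)
      = Real.exp (t * μ + t ^ 2 * v / 2) * gaussianPDFReal (μ + t * v) v x := by
    intro x
    rw [NNReal.smul_def, smul_eq_mul, Real.coe_toNNReal _ (gaussianPDFReal_nonneg μ v x),
      gaussianPDFReal_mul_exp μ v hv t x]
  simp_rw [this]
  rw [integral_const_mul, integral_gaussianPDFReal_eq_one _ hv, mul_one]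

/-- For a log-normal variable `Z = exp X`, `X ~ N(μ, φ²)`, the population Atkinson index
`1 − (E[Z^{1−ε}])^{1/(1−ε)} / E[Z]` equals `1 − exp(−ε φ² / 2)` for every `ε ≥ 0`, `ε ≠ 1`. -/
theorem atkinson_lognormal (μ φ : ℝ) (hφ : 0 < φ) (ε : ℝ) (hε : 0 ≤ ε) (hε1 : ε ≠ 1) :
    1 - (∫ x, Real.exp ((1 - ε) * x) ∂(gaussianReal μ ⟨φ ^ 2, sq_nonneg φ⟩)) ^ (1 / (1 - ε))
        / (∫ x, Real.exp x ∂(gaussianReal μ ⟨φ ^ 2, sq_nonneg φ⟩))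
      = 1 - Real.exp (-ε * φ ^ 2 / 2) := by
  have hv : (⟨φ ^ 2, sq_nonneg φ⟩ : NNReal) ≠ 0 := by
    simp [← NNReal.coe_eq_zero, hφ.ne']
  have h1ε : 1 - ε ≠ 0 := sub_ne_zero.mpr (fun h => hε1 h.symm)
  have h1 : ∫ x, Real.exp x ∂(gaussianReal μ ⟨φ ^ 2, sq_nonneg φ⟩)
      = Real.exp (μ + φ ^ 2 / 2) := by
    have := integral_exp_gaussianReal μ ⟨φ ^ 2, sq_nonneg φ⟩ hv 1
    simp only [one_mul, one_pow, NNReal.coe_mk] at this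
    exact this
  have h2 := integral_exp_gaussianReal μ ⟨φ ^ 2, sq_nonneg φ⟩ hv (1 - ε)
  change _ = Real.exp ((1 - ε) * μ + (1 - ε) ^ 2 * φ ^ 2 / 2) at h2
  rw [h1, h2]
  rw [← Real.exp_mul, ← Real.exp_sub]
  congr 2
  push_cast
  field_simp
  ring
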